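/- For every integer n ≥ 2, the Littlewood decomposition Φ_n, which sends a partition λ to the pair consisting of its n-core ω = core_n(λ) and its n-quotient (ν^(0),…,ν^(n−1)) = quot_n(λ), is a bijection from the set 𝒫 of all partitions onto 𝒞_n × 𝒫^n, where 𝒞_n is the set of n-cores. -/

import Mathlib

open scoped Classical

/-- `p k` is the `(k+1)`-st part `λ_{k+1}` of the partition `λ` :
partitions are encoded by their (eventually zero, antitone) sequence of parts. -/
def IsPartition (p : ℕ → ℕ) : Prop :=
  Antitone p ∧ ∃ N, ∀ i, N ≤ i → p i = 0

/-- The number of (nonzero) parts of a partition. -/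
noncomputable def plen (p : ℕ → ℕ) : ℕ := Nat.card {i : ℕ // p i ≠ 0}

/-- The number of boxes `|λ|` of a partition. -/
noncomputable def psize (p : ℕ → ℕ) : ℕ := ∑ i ∈ Finset.range (plen p), p i

/-- The conjugate partition : `pconj p j = λ^tr_{j+1}`. -/
noncomputable def pconj (p : ℕ → ℕ) (j : ℕ) : ℕ := Nat.card {i : ℕ // j + 1 ≤ p i}

/-- The size of the Durfee square of a partition. -/
noncomputable def durfee (p : ℕ → ℕ) : ℕ := Nat.card {i : ℕ // i + 1 ≤ p i}

/-- The cells (boxes) of the Young diagram, `0`-indexed : `(i, j)` is the box in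
row `i+1` and column `j+1`. -/
noncomputable def cells (p : ℕ → ℕ) : Finset (ℕ × ℕ) :=
  (Finset.range (plen p) ×ˢ Finset.range (p 0)).filter fun s => s.2 < p s.1

/-- The hook length of the (0-indexed) box `(i, j)` :
`h = λ_{i+1} - (j+1) + λ^tr_{j+1} - (i+1) + 1`. -/
noncomputable def hookLen (p : ℕ → ℕ) (i j : ℕ) : ℕ :=
  (p i - j) + (pconj p j - i) - 1

/-- The multiset of hook lengths `ℋ(λ)`. -/
noncomputable def hooks (p : ℕ → ℕ) : Multiset ℕ :=
  (cells p).val.map fun s => hookLen p s.1 s.2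

/-- The multiset of hook lengths of the boxes strictly above the main diagonal. -/
noncomputable def hooksAbove (p : ℕ → ℕ) : Multiset ℕ :=
  ((cells p).filter fun s => s.1 < s.2).val.map fun s => hookLen p s.1 s.2

/-- The multiset of hook lengths of the boxes strictly below the main diagonal. -/
noncomputable def hooksBelow (p : ℕ → ℕ) : Multiset ℕ :=
  ((cells p).filter fun s => s.2 < s.1).val.map fun s => hookLen p s.1 s.2

/-- `p` is an `n`-core : no hook length is equal to `n`. -/
def IsCore (n : ℕ) (p : ℕ → ℕ) : Prop := n ∉ hooks p

/-- Self-conjugate partitions. -/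
def SelfConj (p : ℕ → ℕ) : Prop := p = pconj p

/-- Distinct partitions (strictly decreasing nonzero parts). -/
def IsDistinct (p : ℕ → ℕ) : Prop := ∀ i, p (i + 1) ≠ 0 → p (i + 1) < p i

/-- Doubled distinct partitions : `λ_i = λ^tr_i + 1` for `i` at most
the size of the Durfee square. -/
def IsDD (p : ℕ → ℕ) : Prop := ∀ i < durfee p, p i = pconj p i + 1

/-- Conjugates of doubled distinct partitions. -/
def IsDDtr (p : ℕ → ℕ) : Prop := ∃ q, IsPartition q ∧ IsDD q ∧ p = pconj q

/-- The doubled distinct partition `λ̄λ̄` of a distinct partition `λ̄` :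
add `λ̄_i` boxes to the `i`-th column of the shifted Young diagram of `λ̄`. -/
noncomputable def double (b : ℕ → ℕ) : ℕ → ℕ := fun i =>
  if i < plen b then b i + (i + 1)
  else Nat.card {j : ℕ // j < plen b ∧ i + 1 ≤ b j + j}

/-- The self-conjugate partition associated with a distinct partition `λ̄` :
add `λ̄_i - 1` boxes to the `i`-th column of the shifted Young diagram of `λ̄`. -/
noncomputable def scOf (b : ℕ → ℕ) : ℕ → ℕ := fun i =>
  if i < plen b then b i + i
  else Nat.card {j : ℕ // j < plen b ∧ i + 1 ≤ b j + j}

/-- The binary word `ψ(λ) = (c_k)_{k ∈ ℤ}` of a partition :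
`c_k = 0` iff `k ∈ {λ_i - i : i ≥ 1}` and `c_k = 1` otherwise
(i.e. iff `k ∈ {j - λ^tr_j - 1 : j ≥ 1}`). -/
noncomputable def word (p : ℕ → ℕ) (k : ℤ) : ℕ :=
  if ∃ m : ℕ, k = (p m : ℤ) - ((m : ℤ) + 1) then 0 else 1

/-- The `g`-charge of a `g`-core : `m_i = min {k ∈ ℤ : c_{kg+i} = 1}`. -/
noncomputable def ncharge (g : ℕ) (p : ℕ → ℕ) (i : ℕ) : ℤ :=
  sInf {k : ℤ | word p (k * (g : ℤ) + (i : ℤ)) = 1}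

/-- The subword of residue `k` modulo `g` of the word of `p`. -/
noncomputable def subword (g k : ℕ) (p : ℕ → ℕ) (i : ℤ) : ℕ :=
  word p ((g : ℤ) * i + (k : ℤ))

/-- The shift turning the subword of residue `k` into a balanced partition word. -/
noncomputable def qcharge (g : ℕ) (p : ℕ → ℕ) (k : ℕ) : ℤ :=
  (Nat.card {i : ℕ // subword g k p (i : ℤ) = 0} : ℤ) -
    (Nat.card {i : ℕ // subword g k p (-((i : ℤ) + 1)) = 1} : ℤ)

/-- `ν` is the `k`-th component of the `g`-quotient of `p` : its word is the
subword of residue `k` of the word of `p`, reindexed so as to be balanced. -/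
def IsQuotientAt (g : ℕ) (p : ℕ → ℕ) (k : ℕ) (ν : ℕ → ℕ) : Prop :=
  ∀ i : ℤ, word ν i = subword g k p (i + qcharge g p k)

/-- `ω` is the `g`-core of `p` : every subword of its word is sorted
(all `0`'s, then all `1`'s), with transition index the charge of `p`. -/
def IsCoreOf (g : ℕ) (p ω : ℕ → ℕ) : Prop :=
  ∀ k < g, ∀ i : ℤ, (subword g k ω i = 1 ↔ qcharge g p k ≤ i)

/-- `(ω, ν)` is the Littlewood decomposition of `p` for the modulus `g`. -/
def IsLittlewood (g : ℕ) (p ω : ℕ → ℕ) (ν : ℕ → ℕ → ℕ) : Prop :=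
  IsCoreOf g p ω ∧ ∀ k < g, IsQuotientAt g p k (ν k)

/-- The number `a_r` of boxes of residue `r` modulo `g`
(the residue of the box `(i, j)` -- `0`-indexed -- being `(j - i) mod g`). -/
noncomputable def resCount (g : ℕ) (p : ℕ → ℕ) (r : ℕ) : ℕ :=
  ((cells p).filter fun s => ((s.2 : ℤ) - (s.1 : ℤ)) % (g : ℤ) = (r : ℤ)).card

/-- The rectangular partition with `r` rows of length `c`. -/
def rect (r c : ℕ) : ℕ → ℕ := fun i => if i < r then c else 0

/-- The statistic `m = max({1} ∪ {(g + λ̄_i)/g : λ̄_i ≡ 0 (mod g)})`. -/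
noncomputable def mStat (g : ℕ) (b : ℕ → ℕ) : ℕ :=
  sSup ({1} ∪ {k : ℕ | ∃ i < plen b, g ∣ b i ∧ k = (g + b i) / g})

/-- The statistic `m' = max({0} ∪ {λ̄_i/g : λ̄_i ≡ g/2 (mod g)})`. -/
noncomputable def mStat' (g : ℕ) (b : ℕ → ℕ) : ℕ :=
  sSup ({0} ∪ {k : ℕ | ∃ i < plen b, 2 * (b i % g) = g ∧ k = b i / g})

-- §1 basics

/-- zero positions sequence -/
def zseq (p : ℕ → ℕ) (m : ℕ) : ℤ := (p m : ℤ) - ((m : ℤ) + 1)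

lemma word_le_one (p : ℕ → ℕ) (k : ℤ) : word p k ≤ 1 := by
  unfold word; split <;> omega

lemma word_eq_zero_iff {p : ℕ → ℕ} {k : ℤ} : word p k = 0 ↔ ∃ m, k = zseq p m := by
  unfold word zseq; split <;> simp_all

lemma word_eq_one_iff {p : ℕ → ℕ} {k : ℤ} : word p k = 1 ↔ ∀ m, k ≠ zseq p m := by
  unfold word zseq; split <;> simp_all

lemma zseq_strictAnti {p : ℕ → ℕ} (hp : IsPartition p) : StrictAnti (zseq p) := by
  apply strictAnti_nat_of_succ_lt
  intro m
  have h1 : p (m + 1) ≤ p m := hp.1 (by omega)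
  unfold zseq; push_cast; omega

lemma card_downward {P : ℕ → Prop} (hdc : ∀ i j, i ≤ j → P j → P i)
    (hfin : ∃ N, ∀ i, N ≤ i → ¬ P i) (i : ℕ) : P i ↔ i < Nat.card {i // P i} := by
  obtain ⟨N, hN⟩ := hfin
  have hsub : {i | P i} ⊆ Set.Iio N := fun j hj => by
    by_contra h; exact hN j (by simpa using h) hj
  have hfin : {i | P i}.Finite := (Set.finite_Iio N).subset hsub
  have hcard : Nat.card {i // P i} = Set.ncard {i | P i} := rfl
  rw [hcard]
  constructor
  · intro hPi
    have h1 : Set.Iic i ⊆ {i | P i} := fun j hj => hdc j i hj hPi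
    have := Set.ncard_le_ncard h1 hfin
    have h2 : (Set.Iic i).ncard = i + 1 := by
      rw [← Finset.coe_Iic, Set.ncard_coe_finset, Nat.card_Iic]
    omega
  · intro h
    by_contra hPi
    have h1 : {i | P i} ⊆ Set.Iio i := by
      intro j hj
      simp only [Set.mem_Iio]
      by_contra hij
      exact hPi (hdc i j (by omega) hj)
    have := Set.ncard_le_ncard h1 (Set.finite_Iio i)
    have h2 : (Set.Iio i).ncard = i := by
      rw [← Finset.coe_Iio, Set.ncard_coe_finset, Nat.card_Iio]
    omega

lemma lt_plen_iff {p : ℕ → ℕ} (hp : IsPartition p) {i : ℕ} : i < plen p ↔ p i ≠ 0 := by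
  obtain ⟨N, hN⟩ := hp.2
  have hdc : ∀ i j, i ≤ j → p j ≠ 0 → p i ≠ 0 := by
    intro i j hij hj
    have := hp.1 hij; omega
  exact (card_downward hdc ⟨N, fun i hi h => h (hN i hi)⟩ i).symm

lemma lt_pconj_iff {p : ℕ → ℕ} (hp : IsPartition p) {j m : ℕ} :
    m < pconj p j ↔ j + 1 ≤ p m := by
  obtain ⟨N, hN⟩ := hp.2
  exact (card_downward (fun a b hab hb => le_trans hb (hp.1 hab))
    ⟨N, fun i hi h => by rw [hN i hi] at h; omega⟩ m).symm

lemma pconj_anti {p : ℕ → ℕ} (hp : IsPartition p) : Antitone (pconj p) := by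
  intro a b hab
  obtain ⟨N, hN⟩ := hp.2
  have hfin : {i : ℕ | a + 1 ≤ p i}.Finite := by
    apply (Set.finite_Iio N).subset
    intro j hj
    simp only [Set.mem_Iio]
    by_contra h
    have := hN j (by omega); simp only [Set.mem_setOf_eq] at hj; omega
  unfold pconj
  have e1 : ∀ c : ℕ, Nat.card {i : ℕ // c + 1 ≤ p i} = Set.ncard {i : ℕ | c + 1 ≤ p i} := fun c => rfl
  rw [e1, e1]
  exact Set.ncard_le_ncard (fun i hi => by simp only [Set.mem_setOf_eq] at *; omega) hfin

-- §2 injectivity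
lemma strictAnti_eq_of_range {f g : ℕ → ℤ} (hf : StrictAnti f) (hg : StrictAnti g)
    (h : ∀ k, (∃ m, f m = k) ↔ (∃ m, g m = k)) : f = g := by
  funext m
  induction m using Nat.strong_induction_on with
  | _ m IH =>
    obtain ⟨j, hj⟩ := (h (f m)).1 ⟨m, rfl⟩
    rcases lt_trichotomy j m with hlt | heq | hgt
    · have h1 : f j = g j := IH j hlt
      have h2 : f m < f j := hf hlt
      omega
    · rw [heq] at hj; omega
    · obtain ⟨j', hj'⟩ := (h (g m)).2 ⟨m, rfl⟩
      rcases lt_trichotomy j' m with hlt' | heq' | hgt'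
      · rw [IH j' hlt'] at hj'
        have := hg.injective hj'
        omega
      · rw [heq'] at hj'; omega
      · have h1 : g j < g m := hg hgt
        have h2 : f j' < f m := hf hgt'
        omega

lemma word_injective {p q : ℕ → ℕ} (hp : IsPartition p) (hq : IsPartition q)
    (h : word p = word q) : p = q := by
  have hz : zseq p = zseq q := by
    apply strictAnti_eq_of_range (zseq_strictAnti hp) (zseq_strictAnti hq)
    intro k
    have hp0 : (∃ m, zseq p m = k) ↔ word p k = 0 := by
      rw [word_eq_zero_iff]
      exact ⟨fun ⟨m, hm⟩ => ⟨m, hm.symm⟩, fun ⟨m, hm⟩ => ⟨m, hm.symm⟩⟩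
    have hq0 : (∃ m, zseq q m = k) ↔ word q k = 0 := by
      rw [word_eq_zero_iff]
      exact ⟨fun ⟨m, hm⟩ => ⟨m, hm.symm⟩, fun ⟨m, hm⟩ => ⟨m, hm.symm⟩⟩
    rw [hp0, hq0, h]
  funext m
  have := congrFun hz m
  unfold zseq at this; omega

lemma word_ext {p q : ℕ → ℕ} (h : ∀ k, word p k = 1 ↔ word q k = 1) : word p = word q := by
  funext k
  have h1 := word_le_one p k
  have h2 := word_le_one q k
  have := h k; omega

-- §3 pre-words and charge
def swd (g k : ℕ) (w : ℤ → ℕ) (i : ℤ) : ℕ := w ((g : ℤ) * i + (k : ℤ))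

def IsPre (w : ℤ → ℕ) : Prop :=
  (∀ k, w k ≤ 1) ∧ (∃ A : ℤ, ∀ k ≤ A, w k = 0) ∧ (∃ B : ℤ, ∀ k, B ≤ k → w k = 1)

noncomputable def chg (w : ℤ → ℕ) : ℤ :=
  (Nat.card {i : ℕ // w (i : ℤ) = 0} : ℤ) - (Nat.card {i : ℕ // w (-((i : ℤ) + 1)) = 1} : ℤ)

lemma natCard_zeros_eq {w : ℤ → ℕ} {B N : ℤ} (hB : ∀ k, B ≤ k → w k = 1) (hN : B ≤ N) :
    (Nat.card {i : ℕ // w (i : ℤ) = 0}) =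
      ((Finset.Ico (0 : ℤ) N).filter (fun k => w k = 0)).card := by
  have h1 : Nat.card {i : ℕ // w (i : ℤ) = 0} = Set.ncard {i : ℕ | w (i : ℤ) = 0} := rfl
  have hinj : Function.Injective (fun (i : ℕ) => (i : ℤ)) := fun a b hab => by
    simpa using hab
  have h2 : (fun (i : ℕ) => (i : ℤ)) '' {i : ℕ | w (i : ℤ) = 0} =
      ↑((Finset.Ico (0 : ℤ) N).filter (fun k => w k = 0)) := by
    ext x
    simp only [Set.mem_image, Set.mem_setOf_eq, Finset.coe_filter, Finset.mem_Ico]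
    constructor
    · rintro ⟨i, hi, rfl⟩
      refine ⟨⟨by positivity, ?_⟩, hi⟩
      by_contra h
      have := hB (i : ℤ) (by omega)
      omega
    · rintro ⟨⟨hx0, hxN⟩, hw'⟩
      exact ⟨x.toNat, by rwa [Int.toNat_of_nonneg hx0], Int.toNat_of_nonneg hx0⟩
  rw [h1, ← Set.ncard_image_of_injective _ hinj, h2, Set.ncard_coe_finset]

lemma natCard_ones_eq {w : ℤ → ℕ} {A M : ℤ} (hA : ∀ k ≤ A, w k = 0) (hM : M ≤ A) :
    (Nat.card {i : ℕ // w (-((i : ℤ) + 1)) = 1}) =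
      ((Finset.Ico M (0 : ℤ)).filter (fun k => w k = 1)).card := by
  have h1 : Nat.card {i : ℕ // w (-((i : ℤ) + 1)) = 1} =
      Set.ncard {i : ℕ | w (-((i : ℤ) + 1)) = 1} := rfl
  have hinj : Function.Injective (fun (i : ℕ) => -((i : ℤ) + 1)) := fun a b hab => by
    simp only at hab; omega
  have h2 : (fun (i : ℕ) => -((i : ℤ) + 1)) '' {i : ℕ | w (-((i : ℤ) + 1)) = 1} =
      ↑((Finset.Ico M (0 : ℤ)).filter (fun k => w k = 1)) := by
    ext x
    simp only [Set.mem_image, Set.mem_setOf_eq, Finset.coe_filter, Finset.mem_Ico]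
    constructor
    · rintro ⟨i, hi, rfl⟩
      refine ⟨⟨?_, by omega⟩, hi⟩
      by_contra h
      have := hA (-((i : ℤ) + 1)) (by omega)
      omega
    · rintro ⟨⟨hxM, hx0⟩, hw'⟩
      refine ⟨(-x - 1).toNat, ?_, by omega⟩
      have harg : -(((-x - 1).toNat : ℤ) + 1) = x := by omega
      rwa [harg]
  rw [h1, ← Set.ncard_image_of_injective _ hinj, h2, Set.ncard_coe_finset]

lemma chg_window {w : ℤ → ℕ} (hbin : ∀ k, w k ≤ 1) {A B M N : ℤ}
    (hA : ∀ k ≤ A, w k = 0) (hB : ∀ k, B ≤ k → w k = 1)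
    (hM : M ≤ A) (hM0 : M ≤ 0) (hN : B ≤ N) (hN0 : 0 ≤ N) :
    chg w = ((Finset.Ico M N).filter (fun k => w k = 0)).card + M := by
  unfold chg
  rw [natCard_zeros_eq hB hN, natCard_ones_eq hA hM]
  have hsplit : Finset.Ico M N = Finset.Ico M 0 ∪ Finset.Ico 0 N :=
    (Finset.Ico_union_Ico_eq_Ico hM0 hN0).symm
  have hdisj : Disjoint ((Finset.Ico M (0:ℤ)).filter (fun k => w k = 0))
      ((Finset.Ico (0:ℤ) N).filter (fun k => w k = 0)) := by
    apply Finset.disjoint_left.2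
    intro x hx hy
    simp only [Finset.mem_filter, Finset.mem_Ico] at hx hy
    omega
  rw [hsplit, Finset.filter_union, Finset.card_union_of_disjoint hdisj]
  have hpart : ((Finset.Ico M (0:ℤ)).filter (fun k => w k = 0)).card
      + ((Finset.Ico M (0:ℤ)).filter (fun k => w k = 1)).card = (-M).toNat := by
    have h1 := Finset.card_filter_add_card_filter_not
      (s := Finset.Ico M (0:ℤ)) (p := fun k => w k = 0)
    have h2 : (Finset.Ico M (0:ℤ)).filter (fun k => ¬ w k = 0)
        = (Finset.Ico M (0:ℤ)).filter (fun k => w k = 1) := by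
      apply Finset.filter_congr
      intro k _
      have := hbin k
      constructor <;> intro <;> omega
    rw [h2] at h1
    rw [h1, Int.card_Ico]
    omega
  omega

lemma chg_shift {w : ℤ → ℕ} (hw : IsPre w) (d : ℤ) :
    chg (fun i => w (i + d)) = chg w - d := by
  obtain ⟨hbin, ⟨A, hA⟩, ⟨B, hB⟩⟩ := hw
  set M : ℤ := min (A - d) (min A (min (-d) 0)) with hMdef
  set N : ℤ := max (B - d) (max B (max (-d) 0)) with hNdef
  have h1 : chg (fun i => w (i + d)) =
      ((Finset.Ico M N).filter (fun k => w (k + d) = 0)).card + M := by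
    exact chg_window (fun k => hbin _) (A := A - d) (B := B - d)
      (fun k hk => hA _ (by omega)) (fun k hk => hB _ (by omega))
      (by omega) (by omega) (by omega) (by omega)
  have h2 : chg w = ((Finset.Ico (M + d) (N + d)).filter (fun k => w k = 0)).card + (M + d) :=
    chg_window hbin hA hB (by omega) (by omega) (by omega) (by omega)
  have h3 : ((Finset.Ico M N).filter (fun k => w (k + d) = 0)).card
      = ((Finset.Ico (M + d) (N + d)).filter (fun k => w k = 0)).card := by
    apply Finset.card_bij (fun k _ => k + d)
    · intro k hk
      simp only [Finset.mem_filter, Finset.mem_Ico] at hk ⊢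
      omega
    · intro k hk k' hk' h
      omega
    · intro b hb
      simp only [Finset.mem_filter, Finset.mem_Ico] at hb
      refine ⟨b - d, ?_, by omega⟩
      simp only [Finset.mem_filter, Finset.mem_Ico]
      exact ⟨⟨by omega, by omega⟩, by rw [show b - d + d = b by omega]; exact hb.2⟩
  rw [h1, h2, h3]
  ring

lemma chg_step (t : ℤ) : chg (fun i => if i < t then 0 else 1) = t := by
  have h := chg_window (w := fun i => if i < t then 0 else 1)
    (fun k => by split <;> omega)
    (A := t - 1) (B := t) (M := min (t-1) 0) (N := max t 0)
    (fun k hk => by rw [if_pos (by omega)])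
    (fun k hk => by rw [if_neg (by omega)])
    (by omega) (by omega) (by omega) (by omega)
  rw [h]
  have heq : ((Finset.Ico (min (t-1) 0) (max t 0)).filter
      (fun k => (if k < t then (0:ℕ) else 1) = 0)) = Finset.Ico (min (t-1) 0) t := by
    ext k
    simp only [Finset.mem_filter, Finset.mem_Ico]
    constructor
    · rintro ⟨⟨h1, h2⟩, h3⟩
      refine ⟨h1, ?_⟩
      by_contra hc
      rw [if_neg (by omega)] at h3
      omega
    · rintro ⟨h1, h2⟩
      exact ⟨⟨h1, by omega⟩, by rw [if_pos h2]⟩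
  rw [heq, Int.card_Ico]
  omega

lemma isPre_shift {w : ℤ → ℕ} (hw : IsPre w) (d : ℤ) : IsPre (fun i => w (i + d)) := by
  obtain ⟨hbin, ⟨A, hA⟩, ⟨B, hB⟩⟩ := hw
  exact ⟨fun k => hbin _, ⟨A - d, fun k hk => hA _ (by omega)⟩,
    ⟨B - d, fun k hk => hB _ (by omega)⟩⟩

lemma sorted_threshold {w : ℤ → ℕ} (hw : IsPre w) (hmono : ∀ i, w i = 1 → w (i + 1) = 1) :
    ∀ i, (w i = 1 ↔ chg w ≤ i) := by
  obtain ⟨hbin, ⟨A, hA⟩, ⟨B, hB⟩⟩ := hw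
  obtain ⟨t, ht1, ht2⟩ := Int.exists_least_of_bdd (P := fun i => w i = 1)
    ⟨A + 1, fun z hz => by
      by_contra h
      have := hA z (by omega)
      omega⟩ ⟨B, hB B le_rfl⟩
  have hup : ∀ i, t ≤ i → w i = 1 :=
    Int.le_induction ht1 (fun n _ ihn => hmono n ihn)
  have hiff : ∀ i, w i = 1 ↔ t ≤ i := fun i => ⟨ht2 i, hup i⟩
  have heq : w = fun i => if i < t then 0 else 1 := by
    funext i
    by_cases h : i < t
    · have h1 : ¬ (w i = 1) := by rw [hiff]; omega
      have := hbin i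
      simp only [if_pos h]
      omega
    · simp only [if_neg h]
      exact (hiff i).2 (by omega)
  have hc : chg w = t := by rw [heq]; exact chg_step t
  intro i
  rw [hiff i, hc]

-- §4 decomposition arithmetic
lemma decomp_emod {g i k : ℤ} (hg : 0 < g) (h0 : 0 ≤ k) (hk : k < g) :
    (g * i + k) % g = k := by
  rw [add_comm, Int.add_mul_emod_self_left]
  exact Int.emod_eq_of_lt h0 hk

lemma decomp_ediv {g i k : ℤ} (hg : 0 < g) (h0 : 0 ≤ k) (hk : k < g) :
    (g * i + k) / g = i := by
  rw [add_comm, Int.add_mul_ediv_left _ _ (by omega : g ≠ 0),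
    Int.ediv_eq_zero_of_lt h0 hk, zero_add]

lemma mul_le_self_of_nonpos' {g a : ℤ} (hg : 1 ≤ g) (ha : a ≤ 0) : g * a ≤ a := by nlinarith

lemma self_le_mul_of_nonneg' {g a : ℤ} (hg : 1 ≤ g) (ha : 0 ≤ a) : a ≤ g * a := by nlinarith

lemma isPre_swd {g k : ℕ} (hg : 0 < g) (hk : k < g) {w : ℤ → ℕ} (hw : IsPre w) :
    IsPre (swd g k w) := by
  obtain ⟨hbin, ⟨A, hA⟩, ⟨B, hB⟩⟩ := hw
  have hg1 : (1:ℤ) ≤ (g:ℤ) := by exact_mod_cast hg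
  have hkg : (k:ℤ) < (g:ℤ) := by exact_mod_cast hk
  refine ⟨fun i => hbin _, ⟨min (A - g) 0, fun i hi => ?_⟩, ⟨max B 0, fun i hi => ?_⟩⟩
  · apply hA
    have h1 : (g:ℤ) * i ≤ (g:ℤ) * (min (A - g) 0) := by
      apply mul_le_mul_of_nonneg_left hi (by positivity)
    have h2 : (g:ℤ) * (min (A - g) 0) ≤ min (A - g) 0 :=
      mul_le_self_of_nonpos' hg1 (by omega)
    have h3 : min (A - g) 0 ≤ A - g := by omega
    linarith
  · apply hB
    have h1 : (g:ℤ) * (max B 0) ≤ (g:ℤ) * i := by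
      apply mul_le_mul_of_nonneg_left hi (by positivity)
    have h2 : max B 0 ≤ (g:ℤ) * (max B 0) :=
      self_le_mul_of_nonneg' hg1 (by omega)
    have h3 : (B:ℤ) ≤ max B 0 := by omega
    have h4 : (0:ℤ) ≤ (k:ℤ) := by positivity
    linarith

lemma chg_sum {g : ℕ} (hg : 0 < g) {w : ℤ → ℕ} (hw : IsPre w) :
    chg w = ∑ k ∈ Finset.range g, chg (swd g k w) := by
  obtain ⟨hbin, ⟨A, hA⟩, ⟨B, hB⟩⟩ := hw
  have hg1 : (1:ℤ) ≤ (g:ℤ) := by exact_mod_cast hg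
  have hgz : (0:ℤ) < (g:ℤ) := by omega
  set a : ℤ := min 0 (A - g) with hadef
  set b : ℤ := max 0 B with hbdef
  have ha0 : a ≤ 0 := by omega
  have haA : a ≤ A - g := by omega
  have hb0 : 0 ≤ b := by omega
  have hbB : B ≤ b := by omega
  have hga : (g:ℤ) * a ≤ a := mul_le_self_of_nonpos' hg1 ha0
  have hgb : b ≤ (g:ℤ) * b := self_le_mul_of_nonneg' hg1 hb0
  -- subword windows
  have hsub : ∀ k, k < g → chg (swd g k w) =
      (((Finset.Ico a b).filter (fun i => w ((g:ℤ) * i + (k:ℤ)) = 0)).card : ℤ) + a := by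
    intro k hk
    have hkg : (k:ℤ) < (g:ℤ) := by exact_mod_cast hk
    have hk0 : (0:ℤ) ≤ (k:ℤ) := by positivity
    apply chg_window (fun i => hbin _) (A := a) (B := b)
    · intro i hi
      apply hA
      have h1 : (g:ℤ) * i ≤ (g:ℤ) * a := mul_le_mul_of_nonneg_left hi (by positivity)
      linarith
    · intro i hi
      apply hB
      have h1 : (g:ℤ) * b ≤ (g:ℤ) * i := mul_le_mul_of_nonneg_left hi (by positivity)
      linarith
    · exact le_rfl
    · exact ha0
    · exact le_rfl
    · exact hb0
  have hbig : chg w =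
      ((((Finset.Ico ((g:ℤ)*a) ((g:ℤ)*b)).filter (fun j => w j = 0)).card : ℤ)) + (g:ℤ)*a :=
    chg_window hbin hA hB (by linarith) (by linarith) (by linarith) (by linarith)
  have hcard : ((Finset.Ico ((g:ℤ)*a) ((g:ℤ)*b)).filter (fun j => w j = 0)).card
      = ∑ k ∈ Finset.range g,
        ((Finset.Ico a b).filter (fun i => w ((g:ℤ) * i + (k:ℤ)) = 0)).card := by
    have hdisj : ∀ k₁ ∈ Finset.range g, ∀ k₂ ∈ Finset.range g, k₁ ≠ k₂ →
        Disjoint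
          (((Finset.Ico a b).filter (fun i => w ((g:ℤ) * i + (k₁:ℤ)) = 0)).image
            (fun i => (g:ℤ) * i + (k₁:ℤ)))
          (((Finset.Ico a b).filter (fun i => w ((g:ℤ) * i + (k₂:ℤ)) = 0)).image
            (fun i => (g:ℤ) * i + (k₂:ℤ))) := by
      intro k₁ h1 k₂ h2 hne
      simp only [Finset.mem_range] at h1 h2
      apply Finset.disjoint_left.2
      intro x hx hy
      simp only [Finset.mem_image] at hx hy
      obtain ⟨i1, _, hi1⟩ := hx
      obtain ⟨i2, _, hi2⟩ := hy
      have e1 : x % (g:ℤ) = (k₁:ℤ) := by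
        rw [← hi1]; exact decomp_emod hgz (by positivity) (by exact_mod_cast h1)
      have e2 : x % (g:ℤ) = (k₂:ℤ) := by
        rw [← hi2]; exact decomp_emod hgz (by positivity) (by exact_mod_cast h2)
      have : (k₁:ℤ) = (k₂:ℤ) := by omega
      exact hne (by exact_mod_cast this)
    have hset : (Finset.Ico ((g:ℤ)*a) ((g:ℤ)*b)).filter (fun j => w j = 0)
        = (Finset.range g).biUnion (fun k =>
          ((Finset.Ico a b).filter (fun i => w ((g:ℤ) * i + (k:ℤ)) = 0)).image
            (fun i => (g:ℤ) * i + (k:ℤ))) := by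
      ext j
      simp only [Finset.mem_filter, Finset.mem_Ico, Finset.mem_biUnion, Finset.mem_range,
        Finset.mem_image]
      constructor
      · rintro ⟨⟨hj1, hj2⟩, hj0⟩
        have hmod0 : 0 ≤ j % (g:ℤ) := Int.emod_nonneg j (by omega)
        have hmodg : j % (g:ℤ) < (g:ℤ) := Int.emod_lt_of_pos j hgz
        have hdm : (g:ℤ) * (j / (g:ℤ)) + j % (g:ℤ) = j := Int.mul_ediv_add_emod j (g:ℤ)
        refine ⟨(j % (g:ℤ)).toNat, by omega, j / (g:ℤ), ?_, ?_⟩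
        · have hdiv1 : a ≤ j / (g:ℤ) := by
            rw [Int.le_ediv_iff_mul_le hgz]
            linarith [mul_comm a (g:ℤ)]
          have hdiv2 : j / (g:ℤ) < b := by
            rw [Int.ediv_lt_iff_lt_mul hgz]
            linarith [mul_comm b (g:ℤ)]
          refine ⟨⟨hdiv1, hdiv2⟩, ?_⟩
          rw [show (((j % (g:ℤ)).toNat : ℤ)) = j % (g:ℤ) by omega, hdm]
          exact hj0
        · rw [show (((j % (g:ℤ)).toNat : ℤ)) = j % (g:ℤ) by omega, hdm]
      · rintro ⟨k, hkg, i, ⟨⟨hia, hib⟩, hw0⟩, rfl⟩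
        have hkg' : (k:ℤ) < (g:ℤ) := by exact_mod_cast hkg
        have hk0 : (0:ℤ) ≤ (k:ℤ) := by positivity
        have h1 : (g:ℤ) * a ≤ (g:ℤ) * i := mul_le_mul_of_nonneg_left hia (by positivity)
        have h2 : (g:ℤ) * (i + 1) ≤ (g:ℤ) * b := mul_le_mul_of_nonneg_left (by omega) (by positivity)
        refine ⟨⟨by linarith, by nlinarith⟩, hw0⟩
    rw [hset, Finset.card_biUnion hdisj]
    apply Finset.sum_congr rfl
    intro k _
    apply Finset.card_image_of_injective
    intro x y hxy
    simp only at hxy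
    have : (g:ℤ) * x = (g:ℤ) * y := by omega
    exact mul_left_cancel₀ (by omega) this
  have hsum : ∑ k ∈ Finset.range g, chg (swd g k w)
      = (∑ k ∈ Finset.range g,
          (((Finset.Ico a b).filter (fun i => w ((g:ℤ) * i + (k:ℤ)) = 0)).card : ℤ))
        + (g:ℤ) * a := by
    rw [Finset.sum_congr rfl (fun k hk => hsub k (Finset.mem_range.1 hk)), Finset.sum_add_distrib]
    congr 1
    rw [Finset.sum_const, Finset.card_range, nsmul_eq_mul]
  rw [hbig, hsum, hcard]
  push_cast
  ring

-- assembly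
lemma uniform_bound {g : ℕ} {Q : ℕ → ℤ → Prop}
    (h : ∀ k, k < g → ∃ A, ∀ i ≤ A, Q k i) :
    ∃ A, ∀ k, k < g → ∀ i ≤ A, Q k i := by
  induction g with
  | zero => exact ⟨0, fun k hk => by omega⟩
  | succ m ih =>
    obtain ⟨A1, hA1⟩ := ih (fun k hk => h k (by omega))
    obtain ⟨A2, hA2⟩ := h m (by omega)
    refine ⟨min A1 A2, fun k hk i hi => ?_⟩
    rcases Nat.lt_succ_iff_lt_or_eq.1 hk with hlt | heq
    · exact hA1 k hlt i (by omega)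
    · subst heq; exact hA2 i (by omega)


noncomputable def asm (g : ℕ) (v : ℕ → ℤ → ℕ) : ℤ → ℕ :=
  fun j => v (j % (g:ℤ)).toNat (j / (g:ℤ))

lemma swd_asm {g k : ℕ} (hg : 0 < g) (hk : k < g) (v : ℕ → ℤ → ℕ) :
    swd g k (asm g v) = v k := by
  funext i
  unfold swd asm
  have hgz : (0:ℤ) < (g:ℤ) := by exact_mod_cast hg
  rw [decomp_emod hgz (by positivity) (by exact_mod_cast hk),
    decomp_ediv hgz (by positivity) (by exact_mod_cast hk)]
  simp

lemma isPre_asm {g : ℕ} (hg : 0 < g) {v : ℕ → ℤ → ℕ} (hv : ∀ k, k < g → IsPre (v k)) :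
    IsPre (asm g v) := by
  have hg1 : (1:ℤ) ≤ (g:ℤ) := by exact_mod_cast hg
  have hgz : (0:ℤ) < (g:ℤ) := by omega
  have hAu : ∃ A, ∀ k, k < g → ∀ i ≤ A, v k i = 0 :=
    uniform_bound (fun k hk => (hv k hk).2.1)
  have hBu : ∃ B, ∀ k, k < g → ∀ i, B ≤ i → v k i = 1 := by
    obtain ⟨A', hA'⟩ := uniform_bound (Q := fun k i => v k (-i) = 1)
      (fun k hk => by
        obtain ⟨_, _, ⟨B, hB⟩⟩ := hv k hk
        exact ⟨-B, fun i hi => hB (-i) (by omega)⟩)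
    exact ⟨-A', fun k hk i hi => by
      have := hA' k hk (-i) (by omega)
      simpa using this⟩
  obtain ⟨A, hA⟩ := hAu
  obtain ⟨B, hB⟩ := hBu
  refine ⟨?_, ⟨(g:ℤ) * (min A 0) - g, fun j hj => ?_⟩, ⟨(g:ℤ) * (max B 0) + g, fun j hj => ?_⟩⟩
  · intro j
    unfold asm
    have h1 : ((j % (g:ℤ)).toNat) < g := by
      have := Int.emod_lt_of_pos j hgz
      have := Int.emod_nonneg j (by omega : (g:ℤ) ≠ 0)
      omega
    exact ((hv _ h1).1 _)
  · unfold asm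
    have h1 : ((j % (g:ℤ)).toNat) < g := by
      have := Int.emod_lt_of_pos j hgz
      have := Int.emod_nonneg j (by omega : (g:ℤ) ≠ 0)
      omega
    apply hA _ h1
    -- j / g ≤ min A 0 - 1 ≤ A
    have hdm : (g:ℤ) * (j / (g:ℤ)) + j % (g:ℤ) = j := Int.mul_ediv_add_emod j (g:ℤ)
    have hm1 : 0 ≤ j % (g:ℤ) := Int.emod_nonneg j (by omega)
    have hm2 : j % (g:ℤ) < (g:ℤ) := Int.emod_lt_of_pos j hgz
    -- g * (j/g) ≤ j < g*(min A 0 - 1) + g = g * (min A 0): so j/g < min A 0 ≤ A... 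
    by_contra hcon
    have h2 : min A 0 ≤ j / (g:ℤ) := by omega
    have h3 : (g:ℤ) * (min A 0) ≤ (g:ℤ) * (j / (g:ℤ)) :=
      mul_le_mul_of_nonneg_left h2 (by positivity)
    linarith
  · unfold asm
    have h1 : ((j % (g:ℤ)).toNat) < g := by
      have := Int.emod_lt_of_pos j hgz
      have := Int.emod_nonneg j (by omega : (g:ℤ) ≠ 0)
      omega
    apply hB _ h1
    have hdm : (g:ℤ) * (j / (g:ℤ)) + j % (g:ℤ) = j := Int.mul_ediv_add_emod j (g:ℤ)
    have hm1 : 0 ≤ j % (g:ℤ) := Int.emod_nonneg j (by omega)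
    have hm2 : j % (g:ℤ) < (g:ℤ) := Int.emod_lt_of_pos j hgz
    by_contra hcon
    have h2 : j / (g:ℤ) ≤ max B 0 := by omega
    have h3 : (g:ℤ) * (j / (g:ℤ)) ≤ (g:ℤ) * (max B 0) :=
      mul_le_mul_of_nonneg_left h2 (by positivity)
    linarith

-- §5 word of a partition is a balanced pre-word
lemma isPre_word {p : ℕ → ℕ} (hp : IsPartition p) : IsPre (word p) := by
  obtain ⟨N, hN⟩ := hp.2
  refine ⟨word_le_one p, ⟨-(N:ℤ) - 1, fun k hk => ?_⟩, ⟨(p 0 : ℤ), fun k hk => ?_⟩⟩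
  · rw [word_eq_zero_iff]
    refine ⟨(-k - 1).toNat, ?_⟩
    have hm : ((-k - 1).toNat : ℤ) = -k - 1 := by omega
    have h0 : p ((-k - 1).toNat) = 0 := hN _ (by omega)
    unfold zseq
    rw [h0, hm]
    omega
  · rw [word_eq_one_iff]
    intro m
    have h1 : p m ≤ p 0 := hp.1 (Nat.zero_le m)
    unfold zseq
    omega

lemma chg_word {p : ℕ → ℕ} (hp : IsPartition p) : chg (word p) = 0 := by
  obtain ⟨N, hN⟩ := hp.2
  have hA : ∀ k ≤ -(N:ℤ) - 1, word p k = 0 := by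
    intro k hk
    rw [word_eq_zero_iff]
    refine ⟨(-k - 1).toNat, ?_⟩
    have hm : ((-k - 1).toNat : ℤ) = -k - 1 := by omega
    have h0 : p ((-k - 1).toNat) = 0 := hN _ (by omega)
    unfold zseq
    rw [h0, hm]
    omega
  have hB : ∀ k, (p 0 : ℤ) ≤ k → word p k = 1 := by
    intro k hk
    rw [word_eq_one_iff]
    intro m
    have h1 : p m ≤ p 0 := hp.1 (Nat.zero_le m)
    unfold zseq
    omega
  have hwin := chg_window (word_le_one p) hA hB (le_refl (-(N:ℤ) - 1)) (by omega)
    (le_refl ((p 0 : ℤ))) (by positivity)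
  have hfil : ((Finset.Ico (-(N:ℤ) - 1) ((p 0 : ℤ))).filter (fun k => word p k = 0))
      = (Finset.range (N + 1)).image (zseq p) := by
    ext k
    simp only [Finset.mem_filter, Finset.mem_Ico, Finset.mem_image, Finset.mem_range]
    constructor
    · rintro ⟨⟨h1, h2⟩, h0⟩
      obtain ⟨m, hm⟩ := word_eq_zero_iff.1 h0
      refine ⟨m, ?_, hm.symm⟩
      by_contra hc
      have hpm : p m = 0 := hN m (by omega)
      unfold zseq at hm
      rw [hpm] at hm
      omega
    · rintro ⟨m, hm, rfl⟩
      have h1 : p m ≤ p 0 := hp.1 (Nat.zero_le m)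
      refine ⟨⟨?_, ?_⟩, word_eq_zero_iff.2 ⟨m, rfl⟩⟩ <;> unfold zseq <;> omega
  rw [hwin, hfil, Finset.card_image_of_injective _ (zseq_strictAnti hp).injective,
    Finset.card_range]
  push_cast
  ring

-- §6 construction of a partition from a balanced pre-word
noncomputable def zlt (w : ℤ → ℕ) (x : ℤ) : ℤ :=
  if h : ∃ k, w k = 0 ∧ k < x then
    Classical.choose (Int.exists_greatest_of_bdd ⟨x, fun z hz => le_of_lt hz.2⟩ h)
  else 0

lemma zlt_spec {w : ℤ → ℕ} {x : ℤ} (h : ∃ k, w k = 0 ∧ k < x) :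
    w (zlt w x) = 0 ∧ zlt w x < x ∧ ∀ k, w k = 0 → k < x → k ≤ zlt w x := by
  unfold zlt
  rw [dif_pos h]
  have hs := Classical.choose_spec
    (Int.exists_greatest_of_bdd (P := fun k => w k = 0 ∧ k < x) ⟨x, fun z hz => le_of_lt hz.2⟩ h)
  exact ⟨hs.1.1, hs.1.2, fun k h1 h2 => hs.2 k ⟨h1, h2⟩⟩

noncomputable def zenum (w : ℤ → ℕ) (B : ℤ) : ℕ → ℤ
  | 0 => zlt w B
  | m + 1 => zlt w (zenum w B m)

section zen
variable {w : ℤ → ℕ} {A B : ℤ}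

lemma zen_ne (hA : ∀ k ≤ A, w k = 0) (x : ℤ) : ∃ k, w k = 0 ∧ k < x :=
  ⟨min A (x - 1), hA _ (min_le_left _ _), by omega⟩

lemma zen_zero (hA : ∀ k ≤ A, w k = 0) : ∀ m, w (zenum w B m) = 0 := by
  intro m
  cases m with
  | zero => exact (zlt_spec (zen_ne hA B)).1
  | succ m => exact (zlt_spec (zen_ne hA _)).1

lemma zen_succ_lt (hA : ∀ k ≤ A, w k = 0) : ∀ m, zenum w B (m + 1) < zenum w B m :=
  fun m => (zlt_spec (zen_ne hA _)).2.1

lemma zen_anti (hA : ∀ k ≤ A, w k = 0) : StrictAnti (zenum w B) :=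
  strictAnti_nat_of_succ_lt (zen_succ_lt hA)

lemma zen_lt_B (hA : ∀ k ≤ A, w k = 0) (hB : ∀ k, B ≤ k → w k = 1) :
    ∀ m, zenum w B m ≤ zenum w B 0 ∧ zenum w B 0 < B := by
  intro m
  constructor
  · exact (zen_anti (B := B) hA).antitone (Nat.zero_le m)
  · by_contra h
    have h1 := hB (zenum w B 0) (by omega)
    have h2 := zen_zero (B := B) hA 0
    omega

lemma zen_greatest0 (hA : ∀ k ≤ A, w k = 0) (hB : ∀ k, B ≤ k → w k = 1) :
    ∀ k, w k = 0 → k ≤ zenum w B 0 := by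
  intro k hk
  refine (zlt_spec (zen_ne hA B)).2.2 k hk ?_
  by_contra h
  have := hB k (by omega)
  omega

lemma zen_greatest_succ (hA : ∀ k ≤ A, w k = 0) :
    ∀ m k, w k = 0 → k < zenum w B m → k ≤ zenum w B (m + 1) :=
  fun m k hk hlt => (zlt_spec (zen_ne hA _)).2.2 k hk hlt

lemma zen_cover (hA : ∀ k ≤ A, w k = 0) (hB : ∀ k, B ≤ k → w k = 1) :
    ∀ k, w k = 0 → ∃ m, zenum w B m = k := by
  intro k hk
  by_contra hc
  push_neg at hc
  have hstep : ∀ m, k < zenum w B m := by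
    intro m
    induction m with
    | zero =>
      have := zen_greatest0 (A := A) hA hB k hk
      have := hc 0
      omega
    | succ m ih =>
      have := zen_greatest_succ (B := B) hA m k hk ih
      have := hc (m + 1)
      omega
  have hdec : ∀ m, zenum w B m ≤ zenum w B 0 - m := by
    intro m
    induction m with
    | zero => omega
    | succ m ih =>
      have := zen_succ_lt (B := B) hA m
      push_cast
      omega
  have h1 := hstep (zenum w B 0 - k).toNat
  have h2 := hdec (zenum w B 0 - k).toNat
  omega

-- counting: with balance
lemma zen_count (hbin : ∀ k, w k ≤ 1) (hA : ∀ k ≤ A, w k = 0) (hB : ∀ k, B ≤ k → w k = 1)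
    (hbal : chg w = 0) {M N : ℤ} (hM : M ≤ A) (hM0 : M ≤ 0) (hN : B ≤ N) (hN0 : 0 ≤ N) :
    (((Finset.Ico M N).filter (fun k => w k = 0)).card : ℤ) = -M := by
  have := chg_window hbin hA hB hM hM0 hN hN0
  omega

lemma zen_upper_count (hbin : ∀ k, w k ≤ 1) (hA : ∀ k ≤ A, w k = 0)
    (hB : ∀ k, B ≤ k → w k = 1) {N : ℤ} (hN : B ≤ N) :
    ∀ m, ((Finset.Ico (zenum w B m + 1) N).filter (fun k => w k = 0))
      = (Finset.range m).image (zenum w B) := by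
  intro m
  ext k
  simp only [Finset.mem_filter, Finset.mem_Ico, Finset.mem_image, Finset.mem_range]
  constructor
  · rintro ⟨⟨h1, h2⟩, h0⟩
    obtain ⟨j, hj⟩ := zen_cover (B := B) hA hB k h0
    refine ⟨j, ?_, hj⟩
    by_contra hc
    have : zenum w B j ≤ zenum w B m := (zen_anti (B := B) hA).antitone (by omega)
    omega
  · rintro ⟨j, hj, rfl⟩
    have h1 : zenum w B m < zenum w B j := zen_anti (B := B) hA hj
    have h2 := zen_lt_B (B := B) hA hB j
    exact ⟨⟨by omega, by omega⟩, zen_zero (B := B) hA j⟩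

lemma zen_lb (hbin : ∀ k, w k ≤ 1) (hA : ∀ k ≤ A, w k = 0) (hB : ∀ k, B ≤ k → w k = 1)
    (hbal : chg w = 0) : ∀ m : ℕ, -((m : ℤ) + 1) ≤ zenum w B m := by
  intro m
  set M : ℤ := min A (min (zenum w B m) 0) with hMdef
  set N : ℤ := max B 0 with hNdef
  have hcnt := zen_count hbin hA hB hbal (M := M) (N := N) (by omega) (by omega)
    (by omega) (by omega)
  have hzB := zen_lt_B (B := B) hA hB m
  have hsplit : Finset.Ico M N = Finset.Ico M (zenum w B m + 1) ∪ Finset.Ico (zenum w B m + 1) N := by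
    rw [Finset.Ico_union_Ico_eq_Ico] <;> omega
  have hdisj : Disjoint ((Finset.Ico M (zenum w B m + 1)).filter (fun k => w k = 0))
      ((Finset.Ico (zenum w B m + 1) N).filter (fun k => w k = 0)) := by
    apply Finset.disjoint_left.2
    intro x hx hy
    simp only [Finset.mem_filter, Finset.mem_Ico] at hx hy
    omega
  rw [hsplit, Finset.filter_union, Finset.card_union_of_disjoint hdisj] at hcnt
  rw [zen_upper_count hbin hA hB (by omega) m,
    Finset.card_image_of_injective _ (zen_anti (B := B) hA).injective, Finset.card_range] at hcnt
  have hle : ((Finset.Ico M (zenum w B m + 1)).filter (fun k => w k = 0)).card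
      ≤ (Finset.Ico M (zenum w B m + 1)).card := Finset.card_filter_le _ _
  rw [Int.card_Ico] at hle
  omega

lemma zen_ub (hbin : ∀ k, w k ≤ 1) (hA : ∀ k ≤ A, w k = 0) (hB : ∀ k, B ≤ k → w k = 1)
    (hbal : chg w = 0) : ∀ m : ℕ, -(m : ℤ) ≤ A → zenum w B m ≤ -((m : ℤ) + 1) := by
  intro m hm
  by_contra hc
  push_neg at hc
  set M : ℤ := -(m : ℤ) with hMdef
  set N : ℤ := max B 0 with hNdef
  have hcnt := zen_count hbin hA hB hbal (M := M) (N := N) (by omega) (by omega)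
    (by omega) (by omega)
  have hsub : (Finset.range (m + 1)).image (zenum w B)
      ⊆ (Finset.Ico M N).filter (fun k => w k = 0) := by
    intro x hx
    simp only [Finset.mem_image, Finset.mem_range] at hx
    obtain ⟨j, hj, rfl⟩ := hx
    have h1 : zenum w B m ≤ zenum w B j := (zen_anti (B := B) hA).antitone (by omega)
    have h2 := zen_lt_B (B := B) hA hB j
    simp only [Finset.mem_filter, Finset.mem_Ico]
    exact ⟨⟨by omega, by omega⟩, zen_zero (B := B) hA j⟩
  have hcard := Finset.card_le_card hsub
  rw [Finset.card_image_of_injective _ (zen_anti (B := B) hA).injective, Finset.card_range] at hcard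
  omega

end zen

lemma exists_partition_of_word {w : ℤ → ℕ} (hw : IsPre w) (hbal : chg w = 0) :
    ∃ p, IsPartition p ∧ word p = w := by
  obtain ⟨hbin, ⟨A, hA⟩, ⟨B, hB⟩⟩ := hw
  have hlb := zen_lb hbin hA hB hbal
  set p : ℕ → ℕ := fun m => (zenum w B m + m + 1).toNat with hpdef
  have hcast : ∀ m, (p m : ℤ) = zenum w B m + m + 1 := by
    intro m
    have := hlb m
    simp only [hpdef]
    omega
  have hzseq : ∀ m, zseq p m = zenum w B m := by
    intro m
    unfold zseq
    rw [hcast m]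
    ring
  have hpart : IsPartition p := by
    constructor
    · apply antitone_nat_of_succ_le
      intro m
      have h1 := zen_succ_lt (B := B) hA m
      have h2 := hcast m
      have h3 := hcast (m + 1)
      push_cast at h3
      omega
    · refine ⟨(-A).toNat, fun m hm => ?_⟩
      have hub := zen_ub hbin hA hB hbal m (by omega)
      have h2 := hcast m
      omega
  refine ⟨p, hpart, ?_⟩
  funext k
  by_cases hk : w k = 0
  · obtain ⟨m, hm⟩ := zen_cover (B := B) hA hB k hk
    rw [hk, word_eq_zero_iff]
    exact ⟨m, by rw [hzseq m, hm]⟩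
  · have hk1 : w k = 1 := by have := hbin k; omega
    rw [hk1, word_eq_one_iff]
    intro m hkm
    rw [hzseq m] at hkm
    have := zen_zero (B := B) hA m
    rw [← hkm] at this
    omega

-- §7 hooks vs word
noncomputable def yseq (p : ℕ → ℕ) (j : ℕ) : ℤ := (j : ℤ) - (pconj p j : ℤ)

lemma yseq_one {p : ℕ → ℕ} (hp : IsPartition p) (j : ℕ) : word p (yseq p j) = 1 := by
  rw [word_eq_one_iff]
  intro m
  by_cases h : j + 1 ≤ p m
  · have h2 : m < pconj p j := (lt_pconj_iff hp).2 h
    unfold yseq zseq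
    omega
  · have h2 : ¬ (m < pconj p j) := fun hc => h ((lt_pconj_iff hp).1 hc)
    unfold yseq zseq
    omega

lemma pconj_zero_eq_plen (p : ℕ → ℕ) : pconj p 0 = plen p := by
  unfold pconj plen
  exact Nat.card_congr (Equiv.subtypeEquivRight (fun i => by omega))

lemma word_one_exists {p : ℕ → ℕ} (hp : IsPartition p) {k : ℤ} (h1 : word p k = 1) :
    ∃ j : ℕ, k = yseq p j := by
  by_contra hc
  push_neg at hc
  have hzero : word p k = 0 := by
    rw [word_eq_zero_iff]
    by_cases hcase : k < yseq p 0
    · refine ⟨(-k - 1).toNat, ?_⟩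
      have hy0 : yseq p 0 = -(pconj p 0 : ℤ) := by unfold yseq; omega
      have hlen : ¬ ((-k - 1).toNat < plen p) := by
        rw [← pconj_zero_eq_plen]
        omega
      have hpm : p ((-k - 1).toNat) = 0 := by
        by_contra hne
        exact hlen ((lt_plen_iff hp).2 hne)
      unfold zseq
      rw [hpm]
      omega
    · push_neg at hcase
      set bound : ℕ := (k + pconj p 0).toNat with hbound
      have hbnd : ∀ j' : ℕ, yseq p j' ≤ k → j' ≤ bound := by
        intro j' hj'
        have hpc : pconj p j' ≤ pconj p 0 := pconj_anti hp (Nat.zero_le j')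
        unfold yseq at hj'
        omega
      set j : ℕ := Nat.findGreatest (fun j => yseq p j ≤ k) bound with hjdef
      have hPj : yseq p j ≤ k :=
        Nat.findGreatest_spec (P := fun j => yseq p j ≤ k) (Nat.zero_le bound) hcase
      have hnot : ¬ (yseq p (j + 1) ≤ k) := by
        intro hle
        have hble : j + 1 ≤ bound := hbnd _ hle
        exact absurd hle (Nat.findGreatest_is_greatest (P := fun j => yseq p j ≤ k) (by omega) hble)
      have hstrict : yseq p j < k := lt_of_le_of_ne hPj (fun he => hc j he.symm)
      have hkj : k ≤ (j : ℤ) := by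
        have : yseq p (j + 1) ≤ (j : ℤ) + 1 := by unfold yseq; push_cast; omega
        omega
      set m : ℕ := ((j : ℤ) - k).toNat with hmdef
      have hm : (m : ℤ) = (j : ℤ) - k := by omega
      have h_lt : m < pconj p j := by
        unfold yseq at hstrict
        omega
      have h_ge : ¬ (m < pconj p (j + 1)) := by
        unfold yseq at hnot
        push_cast at hnot
        omega
      have hpm1 : j + 1 ≤ p m := (lt_pconj_iff hp).1 h_lt
      have hpm2 : ¬ (j + 1 + 1 ≤ p m) := fun hcon => h_ge ((lt_pconj_iff hp).2 hcon)
      have hpm : p m = j + 1 := by omega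
      refine ⟨m, ?_⟩
      unfold zseq
      rw [hpm]
      push_cast
      omega
  omega

lemma mem_cells {p : ℕ → ℕ} (hp : IsPartition p) {s : ℕ × ℕ} :
    s ∈ cells p ↔ s.2 < p s.1 := by
  unfold cells
  simp only [Finset.mem_filter, Finset.mem_product, Finset.mem_range]
  constructor
  · exact fun h => h.2
  · intro h
    refine ⟨⟨(lt_plen_iff hp).2 (by omega), ?_⟩, h⟩
    exact lt_of_lt_of_le h (hp.1 (Nat.zero_le s.1))

lemma mem_hooks_iff {p : ℕ → ℕ} (hp : IsPartition p) {n : ℕ} (hn : 1 ≤ n) :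
    n ∈ hooks p ↔ ∃ j : ℤ, word p j = 1 ∧ word p (j + n) = 0 := by
  unfold hooks
  rw [Multiset.mem_map]
  constructor
  · rintro ⟨s, hs, hlen⟩
    have hcell : s.2 < p s.1 := (mem_cells hp).1 (Finset.mem_def.2 hs)
    have h1 : s.2 + 1 ≤ p s.1 := hcell
    have h2 : s.1 < pconj p s.2 := (lt_pconj_iff hp).2 h1
    refine ⟨yseq p s.2, yseq_one hp s.2, ?_⟩
    have harith : yseq p s.2 + n = zseq p s.1 := by
      unfold hookLen at hlen
      unfold yseq zseq
      omega
    rw [harith, word_eq_zero_iff]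
    exact ⟨s.1, rfl⟩
  · rintro ⟨j', h1, h0⟩
    obtain ⟨jj, rfl⟩ := word_one_exists hp h1
    obtain ⟨m, hm⟩ := word_eq_zero_iff.1 h0
    have hcell : jj < p m := by
      by_contra hcon
      push_neg at hcon
      have h2 : ¬ (m < pconj p jj) := fun h => by
        have := (lt_pconj_iff hp).1 h
        omega
      unfold yseq zseq at hm
      omega
    have h2 : m < pconj p jj := (lt_pconj_iff hp).2 hcell
    refine ⟨(m, jj), Finset.mem_def.1 ((mem_cells hp).2 hcell), ?_⟩
    show hookLen p m jj = n
    unfold hookLen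
    unfold yseq zseq at hm
    omega

lemma isCore_iff {p : ℕ → ℕ} (hp : IsPartition p) {n : ℕ} (hn : 1 ≤ n) :
    IsCore n p ↔ ∀ j : ℤ, word p j = 1 → word p (j + n) = 1 := by
  unfold IsCore
  rw [mem_hooks_iff hp hn]
  constructor
  · intro h j hj
    have hb := word_le_one p (j + n)
    by_contra hcon
    exact h ⟨j, hj, by omega⟩
  · rintro h ⟨j, h1, h0⟩
    rw [h j h1] at h0
    omega

-- §8 bridge lemmas
lemma subword_eq_swd (g k : ℕ) (p : ℕ → ℕ) : subword g k p = swd g k (word p) := rfl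

lemma qcharge_eq_chg (g : ℕ) (p : ℕ → ℕ) (k : ℕ) :
    qcharge g p k = chg (swd g k (word p)) := rfl

-- §9 main construction (forward)
lemma exists_phi {n : ℕ} (hn : 2 ≤ n) {p : ℕ → ℕ} (hp : IsPartition p) :
    ∃ (ω : ℕ → ℕ) (ν : ℕ → ℕ → ℕ), (IsPartition ω ∧ IsCore n ω) ∧ (∀ k, k < n → IsPartition (ν k)) ∧
      IsCoreOf n p ω ∧ ∀ k, k < n → IsQuotientAt n p k (ν k) := by
  have hg : 0 < n := by omega
  have hwp := isPre_word hp
  set e : ℕ → ℤ := fun k => chg (swd n k (word p)) with hedef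
  set S : ℤ → ℕ := asm n (fun k i => if i < e k then 0 else 1) with hSdef
  have hSpre : IsPre S := by
    apply isPre_asm hg
    intro k _
    exact ⟨fun i => by dsimp only; split <;> omega,
      ⟨e k - 1, fun i hi => if_pos (by omega)⟩,
      ⟨e k, fun i hi => if_neg (by omega)⟩⟩
  have hSsub : ∀ k, k < n → swd n k S = fun i => if i < e k then (0:ℕ) else 1 :=
    fun k hk => swd_asm hg hk _
  have hSbal : chg S = 0 := by
    have h1 : ∀ k ∈ Finset.range n, chg (swd n k S) = chg (swd n k (word p)) := by
      intro k hk
      rw [hSsub k (Finset.mem_range.1 hk), chg_step (e k), hedef]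
    rw [chg_sum hg hSpre, Finset.sum_congr rfl h1, ← chg_sum hg hwp, chg_word hp]
  obtain ⟨ω, hω, hωw⟩ := exists_partition_of_word hSpre hSbal
  have hqpre : ∀ k, k < n → IsPre (fun i => swd n k (word p) (i + e k)) :=
    fun k hk => isPre_shift (isPre_swd hg hk hwp) (e k)
  have hqbal : ∀ k, k < n → chg (fun i => swd n k (word p) (i + e k)) = 0 := by
    intro k hk
    rw [chg_shift (isPre_swd hg hk hwp) (e k)]
    simp [hedef]
  have hex : ∀ k, ∃ q, k < n →
      (IsPartition q ∧ word q = fun i => swd n k (word p) (i + e k)) := by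
    intro k
    by_cases hk : k < n
    · obtain ⟨q, h1, h2⟩ := exists_partition_of_word (hqpre k hk) (hqbal k hk)
      exact ⟨q, fun _ => ⟨h1, h2⟩⟩
    · exact ⟨fun _ => 0, fun h => absurd h hk⟩
  choose ν hνspec using hex
  refine ⟨ω, ν, ⟨hω, ?_⟩, fun k hk => (hνspec k hk).1, ?_, ?_⟩
  · -- IsCore n ω
    rw [isCore_iff hω (by omega)]
    intro j hj
    rw [hωw] at hj ⊢
    have hmod : (j + (n:ℤ)) % (n:ℤ) = j % (n:ℤ) := by
      conv_lhs => rw [show j + (n:ℤ) = j + (n:ℤ)*1 by ring]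
      rw [Int.add_mul_emod_self_left]
    have hdiv : (j + (n:ℤ)) / (n:ℤ) = j / (n:ℤ) + 1 := by
      rw [show j + (n:ℤ) = j + (n:ℤ)*1 by ring,
        Int.add_mul_ediv_left _ _ (show (n:ℤ) ≠ 0 by omega)]
    show asm n (fun k i => if i < e k then (0:ℕ) else 1) (j + n) = 1
    have hj' : asm n (fun k i => if i < e k then (0:ℕ) else 1) j = 1 := hj
    unfold asm at hj' ⊢
    rw [hmod, hdiv]
    dsimp only at hj' ⊢
    by_cases hlt : j / (n:ℤ) < e ((j % (n:ℤ)).toNat)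
    · rw [if_pos hlt] at hj'
      omega
    · rw [if_neg (show ¬ (j / (n:ℤ) + 1 < e ((j % (n:ℤ)).toNat)) by omega)]
  · -- IsCoreOf n p ω
    intro k hk i
    have h1 : subword n k ω i = swd n k S i := by
      rw [subword_eq_swd, hωw]
    rw [h1, hSsub k hk]
    dsimp only
    have hqe : qcharge n p k = e k := by rw [qcharge_eq_chg, hedef]
    rw [hqe]
    constructor
    · intro h
      by_contra hc
      rw [if_pos (by omega)] at h
      omega
    · intro h
      rw [if_neg (by omega)]
  · -- quotients
    intro k hk
    intro i
    rw [(hνspec k hk).2]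
    rfl

-- §10 uniqueness lemmas
lemma word_decomp {g : ℕ} (hg : 0 < g) (q : ℕ → ℕ) (j : ℤ) :
    word q j = subword g ((j % (g:ℤ)).toNat) q (j / (g:ℤ)) := by
  unfold subword
  congr 1
  have hdm : (g:ℤ) * (j / (g:ℤ)) + j % (g:ℤ) = j := Int.mul_ediv_add_emod j (g:ℤ)
  have h0 : 0 ≤ j % (g:ℤ) := Int.emod_nonneg j (by omega)
  have hcast : (((j % (g:ℤ)).toNat : ℤ)) = j % (g:ℤ) := by omega
  rw [hcast]
  linarith

lemma mod_toNat_lt {g : ℕ} (hg : 0 < g) (j : ℤ) : (j % (g:ℤ)).toNat < g := by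
  have h1 := Int.emod_nonneg j (show (g:ℤ) ≠ 0 by omega)
  have h2 := Int.emod_lt_of_pos j (show (0:ℤ) < (g:ℤ) by omega)
  omega

lemma core_unique {g : ℕ} (hg : 0 < g) {p ω ω' : ℕ → ℕ} (hω : IsPartition ω)
    (hω' : IsPartition ω') (h : IsCoreOf g p ω) (h' : IsCoreOf g p ω') : ω = ω' := by
  apply word_injective hω hω'
  apply word_ext
  intro j
  rw [word_decomp hg ω j, word_decomp hg ω' j]
  rw [h _ (mod_toNat_lt hg j), h' _ (mod_toNat_lt hg j)]

lemma quot_unique {g k : ℕ} {p ν ν' : ℕ → ℕ} (hν : IsPartition ν) (hν' : IsPartition ν')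
    (h : IsQuotientAt g p k ν) (h' : IsQuotientAt g p k ν') : ν = ν' := by
  apply word_injective hν hν'
  funext i
  rw [h i, h' i]

lemma charge_eq_of_coreOf {g : ℕ} {p p' ω : ℕ → ℕ}
    (h : IsCoreOf g p ω) (h' : IsCoreOf g p' ω) : ∀ k, k < g → qcharge g p k = qcharge g p' k := by
  intro k hk
  have h1 := h k hk
  have h2 := h' k hk
  have ha := (h2 _).1 ((h1 (qcharge g p k)).2 le_rfl)
  have hb := (h1 _).1 ((h2 (qcharge g p' k)).2 le_rfl)
  omega

lemma p_unique {g : ℕ} (hg : 0 < g) {p p' ω : ℕ → ℕ} (hp : IsPartition p)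
    (hp' : IsPartition p') {ν : ℕ → ℕ → ℕ}
    (h1 : IsCoreOf g p ω) (h2 : ∀ k, k < g → IsQuotientAt g p k (ν k))
    (h1' : IsCoreOf g p' ω) (h2' : ∀ k, k < g → IsQuotientAt g p' k (ν k)) : p = p' := by
  apply word_injective hp hp'
  funext j
  set k : ℕ := (j % (g:ℤ)).toNat with hkdef
  have hk : k < g := mod_toNat_lt hg j
  have hc := charge_eq_of_coreOf h1 h1' k hk
  have e1 : word p j = word (ν k) (j / (g:ℤ) - qcharge g p k) := by
    rw [h2 k hk (j / (g:ℤ) - qcharge g p k)]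
    rw [show j / (g:ℤ) - qcharge g p k + qcharge g p k = j / (g:ℤ) by ring]
    exact word_decomp hg p j
  have e2 : word p' j = word (ν k) (j / (g:ℤ) - qcharge g p' k) := by
    rw [h2' k hk (j / (g:ℤ) - qcharge g p' k)]
    rw [show j / (g:ℤ) - qcharge g p' k + qcharge g p' k = j / (g:ℤ) by ring]
    exact word_decomp hg p' j
  rw [e1, e2, hc]

-- §11 surjectivity construction
lemma exists_p {n : ℕ} (hn : 2 ≤ n) {ω : ℕ → ℕ} (hω : IsPartition ω) (hcore : IsCore n ω)
    {ν : ℕ → ℕ → ℕ} (hν : ∀ k, k < n → IsPartition (ν k)) :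
    ∃ p, IsPartition p ∧ IsCoreOf n p ω ∧ ∀ k, k < n → IsQuotientAt n p k (ν k) := by
  have hg : 0 < n := by omega
  set e : ℕ → ℤ := fun k => chg (swd n k (word ω)) with hedef
  have hthresh : ∀ k, k < n → ∀ i, (swd n k (word ω) i = 1 ↔ e k ≤ i) := by
    intro k hk
    apply sorted_threshold (isPre_swd hg hk (isPre_word hω))
    intro i hi
    have hcc := (isCore_iff hω (by omega)).1 hcore
    have hstep := hcc ((n:ℤ)*i + (k:ℤ)) hi
    show word ω ((n:ℤ)*(i+1) + (k:ℤ)) = 1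
    rw [show (n:ℤ)*(i+1) + (k:ℤ) = ((n:ℤ)*i + (k:ℤ)) + (n:ℤ) by ring]
    exact hstep
  set v : ℕ → ℤ → ℕ := fun k i => word (ν k) (i - e k) with hvdef
  have hvpre : ∀ k, k < n → IsPre (v k) := by
    intro k hk
    have h2 : v k = fun i => word (ν k) (i + -(e k)) := by
      funext i
      simp [hvdef, sub_eq_add_neg]
    rw [h2]
    exact isPre_shift (isPre_word (hν k hk)) (-(e k))
  have hvchg : ∀ k, k < n → chg (v k) = e k := by
    intro k hk
    have h1 : chg (fun i => word (ν k) (i + -(e k))) = chg (word (ν k)) - (-(e k)) :=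
      chg_shift (isPre_word (hν k hk)) (-(e k))
    have h2 : v k = fun i => word (ν k) (i + -(e k)) := by
      funext i; simp [hvdef, sub_eq_add_neg]
    rw [h2, h1, chg_word (hν k hk)]
    ring
  set W : ℤ → ℕ := asm n v with hWdef
  have hWpre : IsPre W := isPre_asm hg hvpre
  have hWsub : ∀ k, k < n → swd n k W = v k := fun k hk => swd_asm hg hk v
  have hWbal : chg W = 0 := by
    have h1 : ∀ k ∈ Finset.range n, chg (swd n k W) = chg (swd n k (word ω)) := by
      intro k hk
      rw [hWsub k (Finset.mem_range.1 hk), hvchg k (Finset.mem_range.1 hk), hedef]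
    rw [chg_sum hg hWpre, Finset.sum_congr rfl h1, ← chg_sum hg (isPre_word hω), chg_word hω]
  obtain ⟨p, hp, hpw⟩ := exists_partition_of_word hWpre hWbal
  have hq : ∀ k, k < n → qcharge n p k = e k := by
    intro k hk
    rw [qcharge_eq_chg, hpw, hWsub k hk, hvchg k hk]
  refine ⟨p, hp, ?_, ?_⟩
  · intro k hk i
    rw [subword_eq_swd, hthresh k hk i, hq k hk]
  · intro k hk i
    have hstep : subword n k p (i + qcharge n p k) = v k (i + e k) := by
      rw [show subword n k p (i + qcharge n p k)
          = swd n k (word p) (i + qcharge n p k) from rfl, hpw, hWsub k hk, hq k hk]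
    rw [hstep]
    show word (ν k) i = word (ν k) (i + e k - e k)
    rw [show i + e k - e k = i by ring]

/-- For every integer `n ≥ 2`, the Littlewood decomposition
`λ ↦ (core_n(λ), quot_n(λ))` is a bijection from the set of all partitions onto
`𝒞_n × 𝒫^n`, where `𝒞_n` is the set of `n`-cores. -/
theorem littlewood_decomposition_bijective (n : ℕ) (hn : 2 ≤ n) :
    ∃ Φ : {p : ℕ → ℕ // IsPartition p} →
        {ω : ℕ → ℕ // IsPartition ω ∧ IsCore n ω} × (Fin n → {ν : ℕ → ℕ // IsPartition ν}),
      Function.Bijective Φ ∧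
      ∀ p : {p : ℕ → ℕ // IsPartition p},
        IsCoreOf n p.1 ((Φ p).1).1 ∧
        ∀ k : Fin n, IsQuotientAt n p.1 (k : ℕ) (((Φ p).2 k).1) := by
  have hg : 0 < n := by omega
  have hex : ∀ p : {p : ℕ → ℕ // IsPartition p},
      ∃ q : {ω : ℕ → ℕ // IsPartition ω ∧ IsCore n ω} × (Fin n → {ν : ℕ → ℕ // IsPartition ν}),
        IsCoreOf n p.1 q.1.1 ∧ ∀ k : Fin n, IsQuotientAt n p.1 (k : ℕ) ((q.2 k).1) := by
    rintro ⟨p, hp⟩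
    obtain ⟨ω, ν, ⟨hω1, hω2⟩, hν, hc, hq⟩ := exists_phi hn hp
    exact ⟨(⟨ω, hω1, hω2⟩, fun k => ⟨ν (k : ℕ), hν _ k.isLt⟩), hc, fun k => hq _ k.isLt⟩
  choose Φ hΦ using hex
  refine ⟨Φ, ⟨?_, ?_⟩, hΦ⟩
  · -- injective
    intro p p' hpp
    obtain ⟨hc, hq⟩ := hΦ p
    obtain ⟨hc', hq'⟩ := hΦ p'
    rw [hpp] at hc hq
    apply Subtype.ext
    set νf : ℕ → ℕ → ℕ := fun k => if h : k < n then ((Φ p').2 ⟨k, h⟩).1 else (fun _ => 0)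
      with hνfdef
    refine p_unique hg p.2 p'.2 (ω := ((Φ p').1).1) (ν := νf) hc ?_ hc' ?_
    · intro k hk
      have h := hq ⟨k, hk⟩
      simpa [hνfdef, dif_pos hk] using h
    · intro k hk
      have h := hq' ⟨k, hk⟩
      simpa [hνfdef, dif_pos hk] using h
  · -- surjective
    rintro ⟨⟨ω, hω1, hω2⟩, νf⟩
    set νn : ℕ → ℕ → ℕ := fun k => if h : k < n then (νf ⟨k, h⟩).1 else (fun _ => 0)
      with hνndef
    have hνn : ∀ k, k < n → IsPartition (νn k) := by
      intro k hk
      simp only [hνndef, dif_pos hk]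
      exact (νf ⟨k, hk⟩).2
    obtain ⟨p, hp, hc, hq⟩ := exists_p hn hω1 hω2 hνn
    refine ⟨⟨p, hp⟩, ?_⟩
    obtain ⟨hc2, hq2⟩ := hΦ ⟨p, hp⟩
    have h1 : (Φ ⟨p, hp⟩).1 = ⟨ω, hω1, hω2⟩ := by
      apply Subtype.ext
      exact core_unique hg (Φ ⟨p, hp⟩).1.2.1 hω1 hc2 hc
    have h2 : (Φ ⟨p, hp⟩).2 = νf := by
      funext k
      apply Subtype.ext
      refine quot_unique (g := n) (p := p) ((Φ ⟨p, hp⟩).2 k).2 (νf k).2 (hq2 k) ?_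
      have h := hq (k : ℕ) k.isLt
      simpa [hνndef, dif_pos k.isLt] using h
    rw [Prod.ext_iff]
    exact ⟨h1, h2⟩
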